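/- Let G be a finite simple graph, R a clique modulator of G with |R| ≤ r, and γ the Grundy number of G. Then there exists a set Q ⊆ V(G)∖R with |Q| ≤ r such that: for every ordering σ_2 of V(G)∖(R ∪ Q), there exists an ordering σ_1 of R ∪ Q such that the first-fit coloring of G with respect to the concatenated ordering σ_1σ_2 uses exactly γ colors. -/

import Mathlib

variable {V : Type*} [Fintype V] [DecidableEq V]

/-- First-fit coloring: process vertices in the order given by `σ`, assigning each
the smallest positive color not used by its already-colored neighbors
(uncolored vertices have value `0`). -/
noncomputable def firstFit (G : SimpleGraph V) (σ : List V) : V → ℕ :=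
  σ.foldl
    (fun c v => Function.update c v (sInf {k | 1 ≤ k ∧ ∀ u, G.Adj u v → c u ≠ k}))
    (fun _ => 0)

set_option linter.unusedSectionVars false

namespace FFaux

noncomputable def step (G : SimpleGraph V) (c : V → ℕ) (v : V) : V → ℕ :=
  Function.update c v (sInf {k | 1 ≤ k ∧ ∀ u, G.Adj u v → c u ≠ k})

lemma firstFit_eq_foldl (G : SimpleGraph V) (l : List V) :
    firstFit G l = l.foldl (step G) (fun _ => 0) := rfl

lemma foldl_persist (G : SimpleGraph V) (l : List V) (c : V → ℕ) (x : V) (hx : x ∉ l) :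
    l.foldl (step G) c x = c x := by
  induction l generalizing c with
  | nil => rfl
  | cons a t ih =>
    simp only [List.foldl_cons]
    rw [ih _ (fun h => hx (List.mem_cons_of_mem _ h))]
    simp only [step, Function.update]
    have : x ≠ a := fun h => hx (h ▸ List.mem_cons_self (a := a) (l := t))
    simp [this]

lemma firstFit_append (G : SimpleGraph V) (l₁ l₂ : List V) :
    firstFit G (l₁ ++ l₂) = l₂.foldl (step G) (firstFit G l₁) := by
  simp [firstFit_eq_foldl, List.foldl_append]

lemma firstFit_zero (G : SimpleGraph V) (l : List V) (x : V) (hx : x ∉ l) :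
    firstFit G l x = 0 := by
  rw [firstFit_eq_foldl]; exact foldl_persist G l _ x hx

lemma firstFit_prefix (G : SimpleGraph V) (l₁ l₂ : List V) (x : V) (hx : x ∉ l₂) :
    firstFit G (l₁ ++ l₂) x = firstFit G l₁ x := by
  rw [firstFit_append]; exact foldl_persist G l₂ _ x hx

lemma firstFit_at (G : SimpleGraph V) (l₁ : List V) (x : V) (l₂ : List V) (hx : x ∉ l₂) :
    firstFit G (l₁ ++ x :: l₂) x
      = sInf {k | 1 ≤ k ∧ ∀ u, G.Adj u x → firstFit G l₁ u ≠ k} := by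
  rw [firstFit_append]
  simp only [List.foldl_cons]
  rw [foldl_persist G l₂ _ x hx]
  simp [step, Function.update]

lemma ffset_nonempty (G : SimpleGraph V) (c : V → ℕ) (x : V) :
    {k | 1 ≤ k ∧ ∀ u, G.Adj u x → c u ≠ k}.Nonempty := by
  refine ⟨Finset.univ.sup c + 1, Nat.le_add_left 1 _, fun u _ => ?_⟩
  have : c u ≤ Finset.univ.sup c := Finset.le_sup (Finset.mem_univ u)
  omega

/-- split a nodup list at a member -/
lemma nodup_split {l : List V} (hl : l.Nodup) {x : V} (hx : x ∈ l) :
    ∃ l₁ l₂, l = l₁ ++ x :: l₂ ∧ x ∉ l₁ ∧ x ∉ l₂ ∧ l₁.Nodup := by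
  obtain ⟨l₁, l₂, rfl⟩ := List.append_of_mem hx
  have h := hl
  rw [List.nodup_append'] at h
  obtain ⟨h1, h2, h3⟩ := h
  refine ⟨l₁, l₂, rfl, fun hx1 => ?_, (List.nodup_cons.mp h2).1, h1⟩
  exact h3 hx1 (List.mem_cons_self (a := x) (l := l₂))

lemma firstFit_pos (G : SimpleGraph V) (l : List V) (hl : l.Nodup) (x : V) (hx : x ∈ l) :
    1 ≤ firstFit G l x := by
  obtain ⟨l₁, l₂, rfl, -, h2, -⟩ := nodup_split hl hx
  rw [firstFit_at G l₁ x l₂ h2]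
  exact (Nat.sInf_mem (ffset_nonempty G _ x)).1

/-- witness property -/
lemma firstFit_witness (G : SimpleGraph V) (l : List V) (hl : l.Nodup) (x : V) (hx : x ∈ l)
    (s : ℕ) (hs1 : 1 ≤ s) (hs2 : s < firstFit G l x) :
    ∃ u, G.Adj u x ∧ firstFit G l u = s := by
  obtain ⟨l₁, l₂, rfl, h1, h2, -⟩ := nodup_split hl hx
  rw [firstFit_at G l₁ x l₂ h2] at hs2
  have hns : s ∉ {k | 1 ≤ k ∧ ∀ u, G.Adj u x → firstFit G l₁ u ≠ k} :=
    fun hmem => absurd (Nat.sInf_le hmem) (by omega)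
  simp only [Set.mem_setOf_eq, not_and, not_forall] at hns
  obtain ⟨u, hadj, hu⟩ := hns hs1
  have hu' : firstFit G l₁ u = s := by tauto
  have humem : u ∈ l₁ := by
    by_contra hnm
    rw [firstFit_zero G l₁ u hnm] at hu'
    omega
  have hul2 : u ∉ x :: l₂ := by
    have := List.disjoint_of_nodup_append (by rwa [] : (l₁ ++ x :: l₂).Nodup)
    exact fun hc => this humem hc
  refine ⟨u, hadj, ?_⟩
  rw [firstFit_prefix G l₁ (x :: l₂) u hul2]
  exact hu'

/-- properness -/
lemma firstFit_proper_aux (G : SimpleGraph V) (l₁ : List V) (x : V) (l₂ : List V)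
    (hnd : (l₁ ++ x :: l₂).Nodup) (y : V) (hy : y ∈ l₁) (hadj : G.Adj y x) :
    firstFit G (l₁ ++ x :: l₂) y ≠ firstFit G (l₁ ++ x :: l₂) x := by
  have hx2 : x ∉ l₂ := by
    have := List.nodup_append.mp hnd
    exact (List.nodup_cons.mp this.2.1).1
  have hyl2 : y ∉ x :: l₂ := fun hc => (List.disjoint_of_nodup_append hnd) hy hc
  rw [firstFit_at G l₁ x l₂ hx2, firstFit_prefix G l₁ (x :: l₂) y hyl2]
  have hmem := Nat.sInf_mem (ffset_nonempty G (firstFit G l₁) x)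
  exact hmem.2 y hadj

lemma firstFit_proper (G : SimpleGraph V) (l : List V) (hl : l.Nodup) (x y : V)
    (hx : x ∈ l) (hy : y ∈ l) (hadj : G.Adj x y) :
    firstFit G l x ≠ firstFit G l y := by
  obtain ⟨l₁, l₂, heq, h1, h2, h3⟩ := nodup_split hl hy
  subst heq
  have hxy : x ≠ y := G.ne_of_adj hadj
  rcases List.mem_append.mp hx with hx1 | hx2
  · exact firstFit_proper_aux G l₁ y l₂ hl x hx1 hadj
  · rcases List.mem_cons.mp hx2 with h | h
    · exact absurd h hxy
    · obtain ⟨a, b, heq2, -, -, -⟩ := nodup_split (List.nodup_cons.mp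
        ((List.nodup_append'.mp hl).2.1)).2 h
      have : l₁ ++ y :: (a ++ x :: b) = (l₁ ++ y :: a) ++ x :: b := by simp
      rw [heq2, this] at hl ⊢
      exact (firstFit_proper_aux G (l₁ ++ y :: a) x b hl y (by simp) (G.adj_symm hadj)).symm


lemma rank_filter_sub (K : Finset ℕ) {a b : ℕ} (hab : a ≤ b) :
    (K.filter (· < a)) ⊆ (K.filter (· < b)) := by
  intro x hx
  rw [Finset.mem_filter] at hx ⊢
  exact ⟨hx.1, by omega⟩

lemma rank_mono (K : Finset ℕ) {a b : ℕ} (hab : a ≤ b) :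
    (K.filter (· < a)).card ≤ (K.filter (· < b)).card :=
  Finset.card_le_card (rank_filter_sub K hab)

lemma rank_lt_of_mem_lt (K : Finset ℕ) {a b : ℕ} (ha : a ∈ K) (hab : a < b) :
    (K.filter (· < a)).card < (K.filter (· < b)).card := by
  apply Finset.card_lt_card
  refine ⟨rank_filter_sub K (le_of_lt hab), fun hsub => ?_⟩
  have h1 : a ∈ K.filter (· < b) := Finset.mem_filter.mpr ⟨ha, hab⟩
  have h2 := hsub h1
  rw [Finset.mem_filter] at h2
  omega

lemma rank_surj (K : Finset ℕ) (j : ℕ) (hj : j < K.card) :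
    ∃ κ ∈ K, (K.filter (· < κ)).card = j := by
  classical
  let e := K.orderIsoOfFin rfl
  set jf : Fin K.card := ⟨j, hj⟩
  refine ⟨(e jf : ℕ), (e jf).2, ?_⟩
  have himg : K.filter (· < (e jf : ℕ))
      = (Finset.Iio jf).image (fun i => ((e i : ℕ))) := by
    ext x
    simp only [Finset.mem_filter, Finset.mem_image, Finset.mem_Iio]
    constructor
    · rintro ⟨hxK, hxlt⟩
      refine ⟨e.symm ⟨x, hxK⟩, ?_, by simp⟩
      have : e (e.symm ⟨x, hxK⟩) < e jf := by
        rw [e.apply_symm_apply]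
        exact Subtype.mk_lt_mk.mpr hxlt
      exact e.lt_iff_lt.mp this
    · rintro ⟨i, hij, rfl⟩
      refine ⟨(e i).2, ?_⟩
      have : e i < e jf := e.lt_iff_lt.mpr hij
      exact this
  rw [himg, Finset.card_image_of_injOn, Fin.card_Iio]
  intro a _ b _ hab
  exact e.injective (Subtype.ext hab)

lemma tail_ge (G : SimpleGraph V) (σ1 σ2 : List V) (h : ℕ)
    (hnd : (σ1 ++ σ2).Nodup)
    (hvis : ∀ v ∈ σ2, ∀ j, 1 ≤ j → j ≤ h →
      ∃ u ∈ σ1, G.Adj u v ∧ firstFit G (σ1 ++ σ2) u = j) :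
    ∀ v ∈ σ2, h + 1 ≤ firstFit G (σ1 ++ σ2) v := by
  intro v hv
  have hnd2 : σ2.Nodup := (List.nodup_append.mp hnd).2.1
  obtain ⟨a, b, heq, ha, hb, -⟩ := nodup_split hnd2 hv
  have heq2 : σ1 ++ σ2 = (σ1 ++ a) ++ v :: b := by rw [heq]; simp
  have hval : firstFit G (σ1 ++ σ2) v
      = sInf {k | 1 ≤ k ∧ ∀ u, G.Adj u v → firstFit G (σ1 ++ a) u ≠ k} := by
    rw [heq2]; exact firstFit_at G _ v b hb
  have hmem := Nat.sInf_mem (ffset_nonempty G (firstFit G (σ1 ++ a)) v)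
  rw [hval]
  set j := sInf {k | 1 ≤ k ∧ ∀ u, G.Adj u v → firstFit G (σ1 ++ a) u ≠ k} with hjdef
  by_contra hle
  push_neg at hle
  have hj1 : 1 ≤ j := hmem.1
  obtain ⟨u, hu1, hadj, huval⟩ := hvis v hv j hj1 (by omega)
  have hundup : (σ1 ++ a).Nodup ∧ u ∉ v :: b := by
    rw [heq2] at hnd
    have h1 := (List.nodup_append.mp hnd).1
    have hdisj := List.disjoint_of_nodup_append hnd
    exact ⟨h1, fun hc => hdisj (List.mem_append_left a hu1) hc⟩
  have : firstFit G (σ1 ++ σ2) u = firstFit G (σ1 ++ a) u := by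
    rw [heq2]
    exact firstFit_prefix G (σ1 ++ a) (v :: b) u hundup.2
  exact (hmem.2 u hadj) (by omega)

lemma finset_max_ge (A : Finset ℕ) (h : ℕ) (hA : ∀ a ∈ A, h + 1 ≤ a) (hne : A.Nonempty) :
    ∃ a ∈ A, h + A.card ≤ a := by
  refine ⟨A.max' hne, A.max'_mem hne, ?_⟩
  have hsub : A ⊆ Finset.Icc (h + 1) (A.max' hne) :=
    fun a ha => Finset.mem_Icc.mpr ⟨hA a ha, A.le_max' a ha⟩
  have hcard := Finset.card_le_card hsub
  rw [Nat.card_Icc] at hcard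
  have := hA _ (A.max'_mem hne)
  omega

lemma mono_lemma (G : SimpleGraph V) (φ : V → ℕ) (l : List V) (hl : l.Nodup)
    (hsort : l.Pairwise (fun a b => φ a ≤ φ b))
    (hpos : ∀ x ∈ l, 1 ≤ φ x)
    (hproper : ∀ x ∈ l, ∀ y ∈ l, G.Adj x y → φ x ≠ φ y)
    (hwit : ∀ x ∈ l, ∀ j, 1 ≤ j → j < φ x → ∃ u ∈ l, G.Adj u x ∧ φ u = j) :
    ∀ x ∈ l, firstFit G l x = φ x := by
  suffices H : ∀ n, ∀ l₁ x l₂, l = l₁ ++ x :: l₂ → l₁.length = n → firstFit G l x = φ x by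
    intro x hx
    obtain ⟨l₁, l₂, heq, -, -, -⟩ := nodup_split hl hx
    exact H l₁.length l₁ x l₂ heq rfl
  intro n
  induction n using Nat.strong_induction_on with
  | _ n IH =>
  intro l₁ x l₂ heq hlen
  have hxl : x ∈ l := heq ▸ (by simp)
  have hnd : (l₁ ++ x :: l₂).Nodup := heq ▸ hl
  have hx2 : x ∉ l₂ := (List.nodup_cons.mp (List.nodup_append.mp hnd).2.1).1
  have hdisj := List.disjoint_of_nodup_append hnd
  -- values of earlier vertices
  have hearlier : ∀ u ∈ l₁, firstFit G l u = φ u := by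
    intro u hu
    obtain ⟨a, b, heq2, -, -, -⟩ := nodup_split (List.nodup_append.mp hnd).1 hu
    have : l = a ++ u :: (b ++ x :: l₂) := by rw [heq, heq2]; simp
    refine IH a.length ?_ a u _ this rfl
    have : l₁.length = a.length + b.length + 1 := by rw [heq2]; simp; omega
    omega
  have hprefval : ∀ u ∈ l₁, firstFit G l₁ u = φ u := by
    intro u hu
    have : firstFit G (l₁ ++ x :: l₂) u = firstFit G l₁ u :=
      firstFit_prefix G l₁ (x :: l₂) u (fun hc => hdisj hu hc)
    rw [← heq] at this
    rw [← this]; exact hearlier u hu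
  have hval : firstFit G l x = sInf {k | 1 ≤ k ∧ ∀ u, G.Adj u x → firstFit G l₁ u ≠ k} := by
    rw [heq]; exact firstFit_at G l₁ x l₂ hx2
  rw [hval]
  have hmemx : φ x ∈ {k | 1 ≤ k ∧ ∀ u, G.Adj u x → firstFit G l₁ u ≠ k} := by
    refine ⟨hpos x hxl, fun u hadj => ?_⟩
    by_cases hu : u ∈ l₁
    · rw [hprefval u hu]
      exact hproper u (heq ▸ (by simp [hu])) x hxl hadj
    · rw [firstFit_zero G l₁ u hu]
      have := hpos x hxl; omega
  refine le_antisymm (Nat.sInf_le hmemx) ?_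
  by_contra hlt
  push_neg at hlt
  have hjmem := Nat.sInf_mem (ffset_nonempty G (firstFit G l₁) x)
  set j := sInf {k | 1 ≤ k ∧ ∀ u, G.Adj u x → firstFit G l₁ u ≠ k} with hj
  obtain ⟨u, hul, hadj, hphiu⟩ := hwit x hxl j hjmem.1 hlt
  have hu1 : u ∈ l₁ := by
    have hune : u ≠ x := by intro h; rw [h] at hphiu; omega
    rcases List.mem_append.mp (heq ▸ hul : u ∈ l₁ ++ x :: l₂) with h | h
    · exact h
    · rcases List.mem_cons.mp h with h' | h'
      · exact absurd h' hune
      · exfalso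
        have hp := heq ▸ hsort
        rw [List.pairwise_append] at hp
        have := (List.pairwise_cons.mp hp.2.1).1 u h'
        omega
  have := hprefval u hu1
  exact (hjmem.2 u hadj) (by omega)

end FFaux

open FFaux Finset

theorem stmt7 (G : SimpleGraph V) (R : Finset V) (r : ℕ) (hr : R.card ≤ r)
    (hclique : G.IsClique ↑(Finset.univ \ R)) (γ : ℕ)
    (hγ : IsGreatest {n | ∃ σ : List V, σ.Nodup ∧ (∀ x, x ∈ σ) ∧
            Finset.univ.sup (firstFit G σ) = n} γ) :
    ∃ Q : Finset V, Q ⊆ Finset.univ \ R ∧ Q.card ≤ r ∧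
      ∀ σ2 : List V, σ2.Nodup → (∀ x, x ∈ σ2 ↔ x ∉ R ∪ Q) →
        ∃ σ1 : List V, σ1.Nodup ∧ (∀ x, x ∈ σ1 ↔ x ∈ R ∪ Q) ∧
          Finset.univ.sup (firstFit G (σ1 ++ σ2)) = γ := by
  classical
  obtain ⟨hγmem, hγub⟩ := hγ
  obtain ⟨σs, hσs_nd, hσs_mem, hσs_sup⟩ := hγmem
  by_cases hk : (univ \ R).card ≤ r
  · -- trivial case: take Q to be the whole clique
    refine ⟨univ \ R, Finset.Subset.refl _, hk, ?_⟩
    intro σ2 hσ2nd hσ2mem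
    have hσ2nil : σ2 = [] := by
      cases σ2 with
      | nil => rfl
      | cons a t =>
        exfalso
        apply (hσ2mem a).mp (List.mem_cons_self (a := a) (l := t))
        by_cases ha : a ∈ R
        · exact Finset.mem_union_left _ ha
        · exact Finset.mem_union_right _ (Finset.mem_sdiff.mpr ⟨Finset.mem_univ a, ha⟩)
    subst hσ2nil
    refine ⟨σs, hσs_nd, fun x => ⟨fun _ => ?_, fun _ => hσs_mem x⟩, by simpa using hσs_sup⟩
    by_cases hx : x ∈ R
    · exact Finset.mem_union_left _ hx
    · exact Finset.mem_union_right _ (Finset.mem_sdiff.mpr ⟨Finset.mem_univ x, hx⟩)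
  · push_neg at hk
    set c : V → ℕ := firstFit G σs with hc
    set C : Finset V := univ \ R with hCdef
    have hkr : r < C.card := hk
    -- basic facts about c
    have hpos : ∀ x, 1 ≤ c x := fun x => firstFit_pos G σs hσs_nd x (hσs_mem x)
    have hprop : ∀ x y, G.Adj x y → c x ≠ c y :=
      fun x y hadj => firstFit_proper G σs hσs_nd x y (hσs_mem x) (hσs_mem y) hadj
    have hwit : ∀ x s, 1 ≤ s → s < c x → ∃ u, G.Adj u x ∧ c u = s :=
      fun x s h1 h2 => firstFit_witness G σs hσs_nd x (hσs_mem x) s h1 h2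
    have hle : ∀ x, c x ≤ γ := by
      intro x; rw [← hσs_sup]; exact Finset.le_sup (Finset.mem_univ x)
    have hcliq : ∀ x ∈ C, ∀ y ∈ C, x ≠ y → G.Adj x y := by
      intro x hx y hy hne
      exact hclique (by simpa using hx) (by simpa using hy) hne
    have hinjC : ∀ x ∈ C, ∀ y ∈ C, c x = c y → x = y := by
      intro x hx y hy hcc
      by_contra hne
      exact hprop x y (hcliq x hx y hy hne) hcc
    set T : Finset ℕ := C.image c with hTdef
    have hTcard : T.card = C.card := by
      apply Finset.card_image_of_injOn
      intro x hx y hy hxy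
      exact hinjC x hx y hy hxy
    have hTsub : T ⊆ Finset.Icc 1 γ := by
      intro t ht
      obtain ⟨x, -, rfl⟩ := Finset.mem_image.mp ht
      exact Finset.mem_Icc.mpr ⟨hpos x, hle x⟩
    set S0 : Finset ℕ := Finset.Icc 1 γ \ T with hS0def
    have hS0card : S0.card = γ - C.card := by
      rw [hS0def, Finset.card_sdiff_of_subset hTsub, Nat.card_Icc, hTcard]
      omega
    have hkγ : C.card ≤ γ := by
      have := Finset.card_le_card hTsub
      rw [hTcard, Nat.card_Icc] at this
      omega
    have hγeq : γ = C.card + S0.card := by omega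
    -- every color in [1, γ] is attained
    have hCne : C.Nonempty := Finset.card_pos.mp (by omega)
    have hattain : ∀ s, 1 ≤ s → s ≤ γ → ∃ w, c w = s := by
      intro s h1 h2
      obtain ⟨x0, hx0⟩ := hCne
      obtain ⟨xm, -, hxm⟩ := Finset.exists_mem_eq_sup univ ⟨x0, Finset.mem_univ x0⟩ c
      have hxmγ : c xm = γ := by rw [← hσs_sup, hxm]
      rcases eq_or_lt_of_le h2 with he | hlt
      · exact ⟨xm, by omega⟩
      · obtain ⟨u, -, hu⟩ := hwit xm s h1 (by omega)
        exact ⟨u, hu⟩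
    have hS0R : ∀ s ∈ S0, ∃ w ∈ R, c w = s := by
      intro s hs
      rw [hS0def, Finset.mem_sdiff, Finset.mem_Icc] at hs
      obtain ⟨⟨h1, h2⟩, hnT⟩ := hs
      obtain ⟨w, hw⟩ := hattain s h1 h2
      refine ⟨w, ?_, hw⟩
      by_contra hwR
      exact hnT (Finset.mem_image.mpr ⟨w, Finset.mem_sdiff.mpr ⟨Finset.mem_univ w, hwR⟩, hw⟩)
    -- the exceptional clique set Q
    set Q : Finset V := C.filter
      (fun v => ∃ s ∈ S0, c v < s ∧ ∀ w ∈ R, c w = s → ¬ G.Adj w v) with hQdef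
    have hQC : Q ⊆ C := Finset.filter_subset _ _
    -- injection from Q into R
    have hQz : ∀ v ∈ Q, ∃ z ∈ R, c z = c v := by
      intro v hv
      rw [hQdef, Finset.mem_filter] at hv
      obtain ⟨hvC, s, hsS0, hvs, huncov⟩ := hv
      obtain ⟨w, hwR, hws⟩ := hS0R s hsS0
      obtain ⟨u, huadj, huc⟩ := hwit w (c v) (hpos v) (by omega)
      by_cases huC : u ∈ C
      · exfalso
        have : u = v := hinjC u huC v hvC huc
        subst this
        exact (huncov w hwR hws) (G.adj_symm huadj)
      · exact ⟨u, by simpa [hCdef] using huC, huc⟩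
    have hcards : Q.card + S0.card ≤ R.card := by
      have hQbound : Q.card ≤ (R.filter (fun z => c z ∈ T)).card := by
        apply Finset.card_le_card_of_injOn (fun v => if h : v ∈ Q then
          Classical.choose (hQz v h) else v)
        · intro v hv
          simp only [Finset.mem_coe] at hv; simp only [hv, dif_pos]
          obtain ⟨hz, hcz⟩ := Classical.choose_spec (hQz v hv)
          refine Finset.mem_filter.mpr ⟨hz, ?_⟩
          rw [hcz]
          exact Finset.mem_image.mpr ⟨v, hQC hv, rfl⟩
        · intro a ha b hb hab
          simp only [Finset.mem_coe] at ha hb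
          simp only [ha, hb, dif_pos] at hab
          have h1 := (Classical.choose_spec (hQz a ha)).2
          have h2 := (Classical.choose_spec (hQz b hb)).2
          rw [hab] at h1
          exact hinjC a (hQC ha) b (hQC hb) (by omega)
      have hS0bound : S0.card ≤ (R.filter (fun z => c z ∉ T)).card := by
        apply Finset.card_le_card_of_injOn (fun s => if h : s ∈ S0 then
          Classical.choose (hS0R s h) else Classical.choice ⟨hCne.choose⟩)
        · intro s hs
          simp only [Finset.mem_coe] at hs; simp only [hs, dif_pos]
          obtain ⟨hz, hcz⟩ := Classical.choose_spec (hS0R s hs)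
          refine Finset.mem_filter.mpr ⟨hz, ?_⟩
          rw [hcz]
          rw [hS0def, Finset.mem_sdiff] at hs
          exact hs.2
        · intro a ha b hb hab
          simp only [Finset.mem_coe] at ha hb
          simp only [ha, hb, dif_pos] at hab
          have h1 := (Classical.choose_spec (hS0R a ha)).2
          have h2 := (Classical.choose_spec (hS0R b hb)).2
          rw [hab] at h1
          omega
      have := Finset.card_filter_add_card_filter_not
        (s := R) (p := fun z => c z ∈ T)
      omega
    have hQr : Q.card ≤ r := by omega
    -- the prefix vertex set and the key colors
    set P : Finset V := R ∪ Q with hPdef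
    set K : Finset ℕ := S0 ∪ Q.image c with hKdef
    have hQimg_card : (Q.image c).card = Q.card := by
      apply Finset.card_image_of_injOn
      intro x hx y hy hxy
      exact hinjC x (hQC hx) y (hQC hy) hxy
    have hdisjK : Disjoint S0 (Q.image c) := by
      rw [Finset.disjoint_left]
      intro a haS0 haQ
      obtain ⟨q, hq, rfl⟩ := Finset.mem_image.mp haQ
      rw [hS0def, Finset.mem_sdiff] at haS0
      exact haS0.2 (Finset.mem_image.mpr ⟨q, hQC hq, rfl⟩)
    have hKcard : K.card = S0.card + Q.card := by
      rw [hKdef, Finset.card_union_of_disjoint hdisjK, hQimg_card]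
    have hKpos : ∀ κ ∈ K, 1 ≤ κ := by
      intro κ hκ
      rcases Finset.mem_union.mp hκ with h1 | h1
      · rw [hS0def, Finset.mem_sdiff, Finset.mem_Icc] at h1
        exact h1.1.1
      · obtain ⟨q, -, rfl⟩ := Finset.mem_image.mp h1
        exact hpos q
    have hblockmem : ∀ u, c u ∈ K → u ∈ P := by
      intro u hu
      by_cases huR : u ∈ R
      · exact Finset.mem_union_left _ huR
      · have huC : u ∈ C := Finset.mem_sdiff.mpr ⟨Finset.mem_univ u, huR⟩
        rcases Finset.mem_union.mp hu with h1 | h1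
        · exfalso
          rw [hS0def, Finset.mem_sdiff] at h1
          exact h1.2 (Finset.mem_image.mpr ⟨u, huC, rfl⟩)
        · obtain ⟨q, hq, hqc⟩ := Finset.mem_image.mp h1
          have : q = u := hinjC q (hQC hq) u huC hqc
          exact Finset.mem_union_right _ (this ▸ hq)
    set φ : V → ℕ := fun x => 1 + (K.filter (· < c x)).card with hφdef
    have hφpos : ∀ x, 1 ≤ φ x := fun x => Nat.le_add_right 1 _
    have hφval : ∀ u κ, c u = κ → κ ∈ K → ∀ j, (K.filter (· < κ)).card = j - 1 → 1 ≤ j →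
        φ u = j := by
      intro u κ hcu hκ j hrank hj1
      rw [hφdef]
      simp only [hcu, hrank]
      omega
    set Pb : Finset V := P.filter (fun x => c x ∈ K) with hPbdef
    set junk : Finset V := P.filter (fun x => ¬ (c x ∈ K)) with hjunkdef
    refine ⟨Q, hQC, hQr, ?_⟩
    intro σ2 hσ2nd hσ2mem
    have hσ2C : ∀ v ∈ σ2, v ∈ C ∧ v ∉ Q := by
      intro v hv
      have := (hσ2mem v).mp hv
      rw [Finset.mem_union] at this
      push_neg at this
      exact ⟨Finset.mem_sdiff.mpr ⟨Finset.mem_univ v, this.1⟩, this.2⟩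
    -- build σ1
    set bl : List V := (Pb.toList).mergeSort (fun a b => decide (φ a ≤ φ b)) with hbldef
    have hblperm : bl.Perm Pb.toList := List.mergeSort_perm _ _
    have hblmem : ∀ x, x ∈ bl ↔ x ∈ Pb := by
      intro x
      rw [hblperm.mem_iff, Finset.mem_toList]
    have hblnd : bl.Nodup := hblperm.nodup_iff.mpr (Finset.nodup_toList _)
    have hblsorted : bl.Pairwise (fun a b => φ a ≤ φ b) := by
      have hs := List.pairwise_mergeSort
        (le := fun a b : V => decide (φ a ≤ φ b))
        (fun a b cc h1 h2 => by
          simp only [decide_eq_true_eq] at *; omega)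
        (fun a b => by
          simp only [Bool.or_eq_true, decide_eq_true_eq]; omega)
        Pb.toList
      rw [← hbldef] at hs
      exact hs.imp (fun {a b} hab => by simpa using hab)
    set σ1 : List V := bl ++ junk.toList with hσ1def
    have hσ1mem : ∀ x, x ∈ σ1 ↔ x ∈ P := by
      intro x
      rw [hσ1def, List.mem_append, hblmem, Finset.mem_toList, hPbdef, hjunkdef]
      constructor
      · rintro (hx | hx) <;> exact Finset.mem_of_mem_filter x hx
      · intro hx
        by_cases hcx : c x ∈ K
        · exact Or.inl (Finset.mem_filter.mpr ⟨hx, hcx⟩)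
        · exact Or.inr (Finset.mem_filter.mpr ⟨hx, hcx⟩)
    have hσ1nd : σ1.Nodup := by
      rw [hσ1def, List.nodup_append']
      refine ⟨hblnd, Finset.nodup_toList _, ?_⟩
      intro x hx1 hx2
      have h1 := Finset.mem_filter.mp ((hblmem x).mp hx1)
      have h2 := Finset.mem_filter.mp (Finset.mem_toList.mp hx2)
      exact h2.2 h1.2
    set L : List V := σ1 ++ σ2 with hLdef
    have hdisj12 : ∀ x ∈ σ1, x ∉ σ2 := by
      intro x hx hx2
      exact ((hσ2mem x).mp hx2) ((hσ1mem x).mp hx)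
    have hLnd : L.Nodup := by
      rw [hLdef, List.nodup_append']
      exact ⟨hσ1nd, hσ2nd, fun x hx => hdisj12 x hx⟩
    have hLmem : ∀ x, x ∈ L := by
      intro x
      rw [hLdef, List.mem_append]
      by_cases hx : x ∈ P
      · exact Or.inl ((hσ1mem x).mpr hx)
      · exact Or.inr ((hσ2mem x).mpr (by rwa [← hPdef]))
    have hsupL : univ.sup (firstFit G L) ≤ γ := hγub ⟨L, hLnd, hLmem, rfl⟩
    -- the mono lemma on the block part
    have hblwit : ∀ x ∈ bl, ∀ j, 1 ≤ j → j < φ x → ∃ u ∈ bl, G.Adj u x ∧ φ u = j := by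
      intro x hx j hj1 hjlt
      have hcxK : c x ∈ K := (Finset.mem_filter.mp ((hblmem x).mp hx)).2
      have hjlt' : j - 1 < (K.filter (· < c x)).card := by
        rw [hφdef] at hjlt
        simp only at hjlt
        omega
      obtain ⟨κ, hκmem, hκrank⟩ := rank_surj (K.filter (· < c x)) (j - 1) hjlt'
      have hκK : κ ∈ K := (Finset.mem_filter.mp hκmem).1
      have hκlt : κ < c x := by
        have := (Finset.mem_filter.mp hκmem).2
        simpa using this
      have hfeq : K.filter (· < κ) = (K.filter (· < c x)).filter (· < κ) := by
        ext z
        simp only [Finset.mem_filter]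
        constructor
        · rintro ⟨hz1, hz2⟩
          exact ⟨⟨hz1, by omega⟩, hz2⟩
        · rintro ⟨⟨hz1, -⟩, hz2⟩
          exact ⟨hz1, hz2⟩
      obtain ⟨u, huadj, huc⟩ := hwit x κ (hKpos κ hκK) hκlt
      have huP : u ∈ P := hblockmem u (huc ▸ hκK)
      have huPb : u ∈ Pb := Finset.mem_filter.mpr ⟨huP, by rw [huc]; exact hκK⟩
      refine ⟨u, (hblmem u).mpr huPb, huadj, ?_⟩
      exact hφval u κ huc hκK j (by rw [hfeq]; exact hκrank) hj1
    have hblproper : ∀ x ∈ bl, ∀ y ∈ bl, G.Adj x y → φ x ≠ φ y := by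
      intro x hx y hy hadj
      have hcx : c x ∈ K := (Finset.mem_filter.mp ((hblmem x).mp hx)).2
      have hcy : c y ∈ K := (Finset.mem_filter.mp ((hblmem y).mp hy)).2
      have hne := hprop x y hadj
      rcases lt_or_gt_of_ne hne with hlt | hlt
      · have := rank_lt_of_mem_lt K hcx hlt
        rw [hφdef]
        simp only
        omega
      · have := rank_lt_of_mem_lt K hcy hlt
        rw [hφdef]
        simp only
        omega
    have hblval : ∀ x ∈ bl, firstFit G bl x = φ x :=
      mono_lemma G φ bl hblnd hblsorted (fun x _ => hφpos x) hblproper hblwit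
    have hblL : ∀ x ∈ bl, firstFit G L x = φ x := by
      intro x hx
      have hL2 : L = bl ++ (junk.toList ++ σ2) := by rw [hLdef, hσ1def]; simp
      have hxnot : x ∉ junk.toList ++ σ2 := by
        intro hc
        rcases List.mem_append.mp hc with h1 | h1
        · have h2 := Finset.mem_filter.mp (Finset.mem_toList.mp h1)
          exact h2.2 (Finset.mem_filter.mp ((hblmem x).mp hx)).2
        · exact hdisj12 x (List.mem_append_left _ hx) h1
      rw [hL2, firstFit_prefix G bl _ x hxnot]
      exact hblval x hx
    -- visibility of all colors in [1, K.card] from every tail vertex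
    have hvis : ∀ v ∈ σ2, ∀ j, 1 ≤ j → j ≤ K.card →
        ∃ u ∈ σ1, G.Adj u v ∧ firstFit G L u = j := by
      intro v hv j hj1 hjle
      obtain ⟨hvC, hvnQ⟩ := hσ2C v hv
      obtain ⟨κ, hκK, hκrank⟩ := rank_surj K (j - 1) (by omega)
      have hκpos := hKpos κ hκK
      have hval : ∀ u, u ∈ Pb → c u = κ → firstFit G L u = j := by
        intro u hu hcu
        rw [hblL u ((hblmem u).mpr hu)]
        exact hφval u κ hcu hκK j hκrank hj1
      have hmemσ1 : ∀ u, u ∈ Pb → u ∈ σ1 := by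
        intro u hu
        exact (hσ1mem u).mpr (Finset.mem_of_mem_filter u hu)
      rcases Finset.mem_union.mp hκK with hκS0 | hκQ
      · have hneq : c v ≠ κ := by
          intro he
          rw [hS0def, Finset.mem_sdiff] at hκS0
          exact hκS0.2 (he ▸ Finset.mem_image.mpr ⟨v, hvC, rfl⟩)
        by_cases hlt : κ < c v
        · obtain ⟨u, huadj, huc⟩ := hwit v κ hκpos hlt
          have huPb : u ∈ Pb := Finset.mem_filter.mpr
            ⟨hblockmem u (huc ▸ hκK), by rw [huc]; exact hκK⟩
          exact ⟨u, hmemσ1 u huPb, huadj, hval u huPb huc⟩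
        · have hlt2 : c v < κ := by omega
          have hcov : ∃ w ∈ R, c w = κ ∧ G.Adj w v := by
            by_contra hno
            push_neg at hno
            apply hvnQ
            rw [hQdef, Finset.mem_filter]
            exact ⟨hvC, κ, hκS0, hlt2, fun w hw hwc => hno w hw hwc⟩
          obtain ⟨w, hwR, hwc, hwadj⟩ := hcov
          have hwPb : w ∈ Pb := Finset.mem_filter.mpr
            ⟨Finset.mem_union_left _ hwR, by rw [hwc]; exact hκK⟩
          exact ⟨w, hmemσ1 w hwPb, hwadj, hval w hwPb hwc⟩
      · obtain ⟨q, hqQ, hqc⟩ := Finset.mem_image.mp hκQ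
        have hqv : q ≠ v := fun he => hvnQ (he ▸ hqQ)
        have hadj := hcliq q (hQC hqQ) v hvC hqv
        have hqPb : q ∈ Pb := Finset.mem_filter.mpr
          ⟨Finset.mem_union_right _ hqQ, by rw [hqc]; exact hκK⟩
        exact ⟨q, hmemσ1 q hqPb, hadj, hval q hqPb hqc⟩
    have htail : ∀ v ∈ σ2, K.card + 1 ≤ firstFit G L v := by
      have := tail_ge G σ1 σ2 K.card (hLdef ▸ hLnd) (by
        intro v hv j hj1 hjle
        obtain ⟨u, hu, h1, h2⟩ := hvis v hv j hj1 hjle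
        exact ⟨u, hu, h1, by rw [← hLdef]; exact h2⟩)
      intro v hv
      have h := this v hv
      rw [← hLdef] at h
      exact h
    -- counting
    have htoF : σ2.toFinset = C \ Q := by
      ext x
      rw [List.mem_toFinset, hσ2mem x, Finset.mem_sdiff]
      constructor
      · intro hnx
        rw [Finset.mem_union] at hnx
        push_neg at hnx
        exact ⟨Finset.mem_sdiff.mpr ⟨Finset.mem_univ x, hnx.1⟩, hnx.2⟩
      · rintro ⟨hx1, hx2⟩ hmem
        rcases Finset.mem_union.mp hmem with h | h
        · exact (Finset.mem_sdiff.mp hx1).2 h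
        · exact hx2 h
    have hmlen : σ2.length = C.card - Q.card := by
      rw [← List.toFinset_card_of_nodup hσ2nd, htoF, Finset.card_sdiff_of_subset hQC]
    have hQk : Q.card < C.card := by
      have := Finset.card_le_card hQC
      omega
    have hm1 : 1 ≤ σ2.length := by omega
    have hinj2 : Set.InjOn (firstFit G L) ↑σ2.toFinset := by
      intro x hx y hy hxy
      by_contra hne
      simp only [Finset.coe_sort_coe, Finset.mem_coe, List.mem_toFinset] at hx hy
      have hxC := (hσ2C x hx).1
      have hyC := (hσ2C y hy).1
      exact firstFit_proper G L hLnd x y (hLmem x) (hLmem y) (hcliq x hxC y hyC hne) hxy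
    set A : Finset ℕ := σ2.toFinset.image (firstFit G L) with hAdef
    have hAcard : A.card = σ2.length := by
      rw [hAdef, Finset.card_image_of_injOn hinj2, List.toFinset_card_of_nodup hσ2nd]
    have hAbig : ∀ a ∈ A, K.card + 1 ≤ a := by
      intro a ha
      obtain ⟨v, hv, rfl⟩ := Finset.mem_image.mp ha
      exact htail v (List.mem_toFinset.mp hv)
    have hAne : A.Nonempty := Finset.card_pos.mp (by omega)
    obtain ⟨a, haA, hage⟩ := finset_max_ge A K.card hAbig hAne
    obtain ⟨v, -, rfl⟩ := Finset.mem_image.mp haA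
    have hsup_ge : γ ≤ univ.sup (firstFit G L) := by
      have h1 : firstFit G L v ≤ univ.sup (firstFit G L) := Finset.le_sup (Finset.mem_univ v)
      omega
    exact ⟨σ1, hσ1nd, hσ1mem, le_antisymm hsupL hsup_ge⟩
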